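/- Let d ≥ 1 and let Q be a real symmetric positive semidefinite d×d matrix. For x ∈ ℝ^d define the symmetric matrix H(x) = ⟪Qx, x⟫^{1/2}·Q + ⟪Qx, x⟫^{-1/2}·(Qx)(Qx)ᵀ, where (Qx)(Qx)ᵀ denotes the outer product and where, when ⟪Qx, x⟫ = 0, the second term is taken to be the zero matrix. Then for all x, y ∈ ℝ^d, ‖H(x) - H(y)‖ ≤ 2·‖Q‖^{3/2}·‖x - y‖, where ‖·‖ applied to matrices is the ℓ²-operator norm. -/

import Mathlib

set_option maxHeartbeats 2000000

open Matrix
open scoped Matrix.Norms.L2Operator RealInnerProductSpace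

section Scalar

lemma scalarL (r s δ a b c : ℝ) (hr : 0 ≤ r) (hs : 0 ≤ s) (hδ : 0 ≤ δ) (hc : 0 ≤ c)
    (ha : |a| ≤ r * c) (hb : |b| ≤ s * c) (hab : |a - b| ≤ δ * c) (hrs : |r - s| ≤ δ) :
    (r * c ^ 2 + a ^ 2 / r) - (s * c ^ 2 + b ^ 2 / s) ≤ 2 * δ * c ^ 2 := by
  have hbs : 0 ≤ b ^ 2 / s := div_nonneg (sq_nonneg b) hs
  have hrsd : r - s ≤ δ := (abs_le.mp hrs).2
  have hsrd : r - δ ≤ s := by linarith [(abs_le.mp hrs).1]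
  rcases eq_or_lt_of_le hr with h0 | hr
  · have ha0 : a = 0 := by
      have h2 : |a| ≤ 0 := by rw [← h0] at ha; simpa using ha
      exact abs_nonpos_iff.mp h2
    rw [← h0, ha0]
    have hsd : s ≤ δ := by nlinarith [(abs_le.mp hrs).1]
    nlinarith [sq_nonneg c]
  · have har : a ^ 2 / r ≤ |a| * c := by
      rw [div_le_iff₀ hr]
      nlinarith [abs_nonneg a, sq_abs a, abs_le.mp ha]
    by_cases hsmall : r ≤ δ ∨ |a| ≤ δ * c
    · have hkey : a ^ 2 / r ≤ δ * c ^ 2 := by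
        rcases hsmall with h | h
        · calc a ^ 2 / r ≤ |a| * c := har
            _ ≤ (r * c) * c := by nlinarith [abs_nonneg a]
            _ ≤ δ * c ^ 2 := by nlinarith
        · calc a ^ 2 / r ≤ |a| * c := har
            _ ≤ (δ * c) * c := by nlinarith [abs_nonneg a]
            _ = δ * c ^ 2 := by ring
      nlinarith [sq_nonneg c]
    · push_neg at hsmall
      obtain ⟨hrδ, haδ⟩ := hsmall
      set A := |a| with hAdef
      have hA : 0 ≤ A := abs_nonneg a
      have hcpos : 0 < c := by
        rcases eq_or_lt_of_le hc with h | h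
        · exfalso; rw [← h] at ha haδ; simp at ha haδ; nlinarith
        · exact h
      have hrd : 0 < r - δ := by
        rcases lt_or_ge δ r with h | h
        · linarith
        · exfalso; nlinarith
      have hspos : 0 < s := by linarith
      have hBb : A - δ * c ≤ |b| := by
        have := abs_sub_abs_le_abs_sub a b
        linarith
      have hAd : 0 ≤ A - δ * c := by linarith
      have hB2 : (A - δ * c) ^ 2 ≤ b ^ 2 := by
        nlinarith [sq_abs b, abs_nonneg b]
      have hb2s : (A - δ * c) ^ 2 / s ≤ b ^ 2 / s := by gcongr
      have hArc : A ≤ r * c := ha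
      have key : A ^ 2 / r - (A - δ * c) ^ 2 / (r - δ) ≤ δ * c ^ 2 := by
        rw [div_sub_div _ _ hr.ne' hrd.ne', div_le_iff₀ (by positivity)]
        nlinarith [mul_nonneg hδ (sq_nonneg (c * r - A))]
      have mono : (A - δ * c) ^ 2 / (r - δ) - (A - δ * c) ^ 2 / s ≤ (s - (r - δ)) * c ^ 2 := by
        rw [div_sub_div _ _ hrd.ne' hspos.ne', div_le_iff₀ (by positivity)]
        have h0 : A - δ * c ≤ (r - δ) * c := by nlinarith
        have h1 : (A - δ * c) ^ 2 ≤ ((r - δ) * c) ^ 2 := pow_le_pow_left₀ hAd h0 2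
        have h2 : ((r - δ) * c) ^ 2 ≤ (r - δ) * s * c ^ 2 := by
          nlinarith [mul_le_mul_of_nonneg_right (mul_le_mul_of_nonneg_left hsrd hrd.le) (sq_nonneg c)]
        have h3 : (A - δ * c) ^ 2 ≤ (r - δ) * s * c ^ 2 := le_trans h1 h2
        have h4 := mul_le_mul_of_nonneg_right h3 (sub_nonneg.mpr hsrd)
        nlinarith [h4]
      have ha2 : a ^ 2 = A ^ 2 := (sq_abs a).symm
      rw [ha2]
      nlinarith [sq_nonneg c]

lemma scalarLabs (r s δ a b c : ℝ) (hr : 0 ≤ r) (hs : 0 ≤ s) (hδ : 0 ≤ δ) (hc : 0 ≤ c)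
    (ha : |a| ≤ r * c) (hb : |b| ≤ s * c) (hab : |a - b| ≤ δ * c) (hrs : |r - s| ≤ δ) :
    |(r * c ^ 2 + a ^ 2 / r) - (s * c ^ 2 + b ^ 2 / s)| ≤ 2 * δ * c ^ 2 := by
  rw [abs_le]
  constructor
  · have := scalarL s r δ b a c hs hr hδ hc hb ha (by rwa [abs_sub_comm]) (by rwa [abs_sub_comm])
    linarith
  · exact scalarL r s δ a b c hr hs hδ hc ha hb hab hrs

end Scalar

section SelfAdjoint

lemma sa_norm_le {E : Type*} [NormedAddCommGroup E] [InnerProductSpace ℝ E]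
    (T : E →L[ℝ] E) (hsym : ∀ x y : E, ⟪T x, y⟫ = ⟪x, T y⟫) {c : ℝ} (hc : 0 ≤ c)
    (h : ∀ x : E, |⟪T x, x⟫| ≤ c * ‖x‖ ^ 2) : ‖T‖ ≤ c := by
  have key : ∀ x y : E, ⟪T x, y⟫ ≤ c * ‖x‖ * ‖y‖ := by
    have key0 : ∀ x y : E, ⟪T x, y⟫ ≤ c / 2 * (‖x‖ ^ 2 + ‖y‖ ^ 2) := by
      intro x y
      have hp : 4 * ⟪T x, y⟫ = ⟪T (x + y), x + y⟫ - ⟪T (x - y), x - y⟫ := by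
        rw [map_add, map_sub, inner_add_left, inner_add_right, inner_add_right,
          inner_sub_left, inner_sub_right, inner_sub_right, hsym y x,
          real_inner_comm y (T x)]
        ring
      have h1 := (abs_le.mp (h (x + y))).2
      have h2 := (abs_le.mp (h (x - y))).1
      have hpar : ‖x + y‖ ^ 2 + ‖x - y‖ ^ 2 = 2 * (‖x‖ ^ 2 + ‖y‖ ^ 2) := by
        have := parallelogram_law_with_norm ℝ x y
        nlinarith [this]
      nlinarith [h1, h2, hp]
    intro x y
    rcases eq_or_ne x 0 with rfl | hx
    · simp
    rcases eq_or_ne y 0 with rfl | hy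
    · simp
    have hxn : 0 < ‖x‖ := norm_pos_iff.mpr hx
    have hyn : 0 < ‖y‖ := norm_pos_iff.mpr hy
    set t : ℝ := Real.sqrt (‖y‖ / ‖x‖) with ht
    have htpos : 0 < t := Real.sqrt_pos.mpr (by positivity)
    have ht2 : t ^ 2 = ‖y‖ / ‖x‖ := Real.sq_sqrt (by positivity)
    have := key0 (t • x) (t⁻¹ • y)
    rw [_root_.map_smul, inner_smul_left, inner_smul_right, norm_smul, norm_smul] at this
    simp only [RCLike.star_def, conj_trivial] at this
    have hinner : t * (t⁻¹ * ⟪T x, y⟫) = ⟪T x, y⟫ := by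
      field_simp
    rw [hinner] at this
    have h3 : (t * ‖x‖) ^ 2 = ‖y‖ * ‖x‖ := by
      rw [mul_pow, ht2]; field_simp
    have h4 : (t⁻¹ * ‖y‖) ^ 2 = ‖x‖ * ‖y‖ := by
      rw [mul_pow, inv_pow, ht2]; field_simp
    calc ⟪T x, y⟫ ≤ c / 2 * ((‖t‖ * ‖x‖) ^ 2 + (‖t⁻¹‖ * ‖y‖) ^ 2) := this
      _ = c / 2 * ((t * ‖x‖) ^ 2 + (t⁻¹ * ‖y‖) ^ 2) := by
          rw [Real.norm_eq_abs, Real.norm_eq_abs, abs_of_pos htpos, abs_of_pos (by positivity)]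
      _ = c * ‖x‖ * ‖y‖ := by rw [h3, h4]; ring
  apply T.opNorm_le_bound hc
  intro x
  rcases eq_or_ne (T x) 0 with h0 | h0
  · rw [h0]; simp; positivity
  have hTx : 0 < ‖T x‖ := norm_pos_iff.mpr h0
  have := key x (T x)
  rw [real_inner_self_eq_norm_sq] at this
  nlinarith [this]

end SelfAdjoint

section Bridges

variable {d : ℕ}

lemma inner_eq_dot (x y : EuclideanSpace ℝ (Fin d)) : ⟪x, y⟫ = x ⬝ᵥ y := by
  simp [PiLp.inner_apply, dotProduct, mul_comm]

lemma clm_apply (M : Matrix (Fin d) (Fin d) ℝ) (x : EuclideanSpace ℝ (Fin d)) :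
    (Matrix.toEuclideanCLM (𝕜 := ℝ) M) x = (WithLp.equiv 2 _).symm (M *ᵥ x) := by
  rfl

lemma clm_inner (M : Matrix (Fin d) (Fin d) ℝ) (x y : EuclideanSpace ℝ (Fin d)) :
    ⟪(Matrix.toEuclideanCLM (𝕜 := ℝ) M) x, y⟫ = (M *ᵥ x) ⬝ᵥ y := by
  rw [clm_apply, inner_eq_dot]
  rfl

lemma dot_symm (M : Matrix (Fin d) (Fin d) ℝ) (hM : Mᵀ = M) (x y : Fin d → ℝ) :
    (M *ᵥ x) ⬝ᵥ y = x ⬝ᵥ (M *ᵥ y) := by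
  rw [dotProduct_comm, dotProduct_mulVec, ← mulVec_transpose, hM]
  exact dotProduct_comm _ _

lemma sym_norm_le (M : Matrix (Fin d) (Fin d) ℝ) (hM : Mᵀ = M) {c : ℝ} (hc : 0 ≤ c)
    (h : ∀ w : EuclideanSpace ℝ (Fin d), |(M *ᵥ w) ⬝ᵥ w| ≤ c * ‖w‖ ^ 2) : ‖M‖ ≤ c := by
  rw [Matrix.cstar_norm_def]
  apply sa_norm_le _ ?_ hc
  · intro w
    rw [clm_inner]
    exact h w
  · intro x y
    rw [clm_inner, real_inner_comm, clm_inner, dot_symm M hM]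
    exact dotProduct_comm _ _

lemma mul_vecMulVec (M : Matrix (Fin d) (Fin d) ℝ) (a b : Fin d → ℝ) :
    M * vecMulVec a b = vecMulVec (M *ᵥ a) b := by
  ext i j
  simp [mul_apply, vecMulVec_apply, mulVec, dotProduct, Finset.sum_mul, mul_assoc]

lemma vecMulVec_mul (M : Matrix (Fin d) (Fin d) ℝ) (a b : Fin d → ℝ) :
    vecMulVec a b * M = vecMulVec a (Mᵀ *ᵥ b) := by
  ext i j
  simp only [mul_apply, vecMulVec_apply, mulVec, dotProduct, transpose_apply, Finset.mul_sum]
  exact Finset.sum_congr rfl fun k _ => by ring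

lemma vecMulVec_mulVec (a b w : Fin d → ℝ) :
    vecMulVec a b *ᵥ w = (b ⬝ᵥ w) • a := by
  ext i
  simp only [mulVec, vecMulVec_apply, dotProduct, Pi.smul_apply, smul_eq_mul, Finset.mul_sum]
  rw [Finset.sum_mul]
  exact Finset.sum_congr rfl fun k _ => by ring

end Bridges

section KeyA

variable {d : ℕ}

noncomputable def Amat (u : EuclideanSpace ℝ (Fin d)) : Matrix (Fin d) (Fin d) ℝ :=
  ‖u‖ • (1 : Matrix (Fin d) (Fin d) ℝ) + ‖u‖⁻¹ • vecMulVec u u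

lemma Amat_transpose (u : EuclideanSpace ℝ (Fin d)) : (Amat u)ᵀ = Amat u := by
  unfold Amat
  rw [transpose_add, transpose_smul, transpose_smul, transpose_one]
  congr 1
  congr 1
  ext i j
  simp [transpose_apply, vecMulVec_apply, mul_comm]

lemma Amat_form (u : EuclideanSpace ℝ (Fin d)) (w : EuclideanSpace ℝ (Fin d)) :
    ((Amat u) *ᵥ w) ⬝ᵥ w = ‖u‖ * ‖w‖ ^ 2 + (u ⬝ᵥ w) ^ 2 / ‖u‖ := by
  unfold Amat
  rw [add_mulVec, smul_mulVec, smul_mulVec, one_mulVec, vecMulVec_mulVec,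
    add_dotProduct, smul_dotProduct, smul_dotProduct, smul_dotProduct]
  have hww : w ⬝ᵥ w = ‖w‖ ^ 2 := by
    rw [← inner_eq_dot, real_inner_self_eq_norm_sq]
  rw [hww]
  simp only [smul_eq_mul]
  rw [div_eq_inv_mul]
  ring

lemma Amat_lip (u v : EuclideanSpace ℝ (Fin d)) :
    ‖Amat u - Amat v‖ ≤ 2 * ‖u - v‖ := by
  apply sym_norm_le _ ?_ (by positivity)
  · intro w
    rw [sub_mulVec, sub_dotProduct, Amat_form, Amat_form]
    have h2 : (2 : ℝ) * ‖u - v‖ * ‖w‖ ^ 2 = 2 * ‖u - v‖ * ‖w‖ ^ 2 := rfl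
    have := scalarLabs ‖u‖ ‖v‖ ‖u - v‖ (u ⬝ᵥ w) (v ⬝ᵥ w) ‖w‖ (norm_nonneg _)
      (norm_nonneg _) (norm_nonneg _) (norm_nonneg _)
      (by rw [← inner_eq_dot]; exact abs_real_inner_le_norm u w)
      (by rw [← inner_eq_dot]; exact abs_real_inner_le_norm v w)
      (by rw [← sub_dotProduct, ← inner_eq_dot]; exact abs_real_inner_le_norm (u - v) w)
      (abs_norm_sub_norm_le u v)
    calc |‖u‖ * ‖w‖ ^ 2 + (u ⬝ᵥ w) ^ 2 / ‖u‖ - (‖v‖ * ‖w‖ ^ 2 + (v ⬝ᵥ w) ^ 2 / ‖v‖)|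
        ≤ 2 * ‖u - v‖ * ‖w‖ ^ 2 := this
      _ = 2 * ‖u - v‖ * ‖w‖ ^ 2 := rfl
  · rw [transpose_sub, Amat_transpose, Amat_transpose]

end KeyA

/-- Lipschitz estimate for the Hessian `H x = ⟪Qx,x⟫^{1/2} Q + ⟪Qx,x⟫^{-1/2} (Qx)(Qx)ᵀ`
of the cubic part of the confining potential, in the ℓ²-operator norm:
`‖H x - H y‖ ≤ 2 ‖Q‖^{3/2} ‖x - y‖`. -/
theorem stmt_4 (d : ℕ) (hd : 1 ≤ d) (Q : Matrix (Fin d) (Fin d) ℝ) (hQ : Q.PosSemidef)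
    (H : EuclideanSpace ℝ (Fin d) → Matrix (Fin d) (Fin d) ℝ)
    (hH : ∀ x : EuclideanSpace ℝ (Fin d),
      H x = Real.sqrt ((Q *ᵥ x) ⬝ᵥ x) • Q +
        (if (Q *ᵥ x) ⬝ᵥ x = 0 then 0
          else (Real.sqrt ((Q *ᵥ x) ⬝ᵥ x))⁻¹ • vecMulVec (Q *ᵥ x) (Q *ᵥ x))) :
    ∀ x y : EuclideanSpace ℝ (Fin d),
      ‖H x - H y‖ ≤ 2 * ‖Q‖ ^ ((3 : ℝ) / 2) * ‖x - y‖ := by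
  intro x y
  obtain ⟨S, hSps, hSS⟩ : ∃ S : Matrix (Fin d) (Fin d) ℝ, S.PosSemidef ∧ S * S = Q := by
    open scoped MatrixOrder in
    exact ⟨CFC.sqrt Q, (CFC.sqrt_nonneg Q).posSemidef, CFC.sqrt_mul_sqrt_self Q hQ.nonneg⟩
  have hSH : Sᴴ = S := hSps.1
  have hST : Sᵀ = S := by
    rw [← Matrix.conjTranspose_eq_transpose_of_trivial]
    exact hSH
  -- the key representation H x = S * Amat (S *ᵥ x) * S
  have hrep : ∀ z : EuclideanSpace ℝ (Fin d),
      H z = S * Amat ((WithLp.equiv 2 _).symm (S *ᵥ z)) * S := by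
    intro z
    set u : EuclideanSpace ℝ (Fin d) := (WithLp.equiv 2 _).symm (S *ᵥ z) with hu
    have huf : (u : Fin d → ℝ) = S *ᵥ z := rfl
    have hQz : Q *ᵥ z = S *ᵥ (u : Fin d → ℝ) := by
      rw [huf, mulVec_mulVec, hSS]
    have hdot : (Q *ᵥ z) ⬝ᵥ z = ‖u‖ ^ 2 := by
      rw [hQz, dot_symm S hST, ← huf, ← inner_eq_dot, real_inner_self_eq_norm_sq]
    have hsqrt : Real.sqrt ((Q *ᵥ z) ⬝ᵥ z) = ‖u‖ := by
      rw [hdot, Real.sqrt_sq (norm_nonneg _)]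
    have hexp : S * Amat u * S = ‖u‖ • Q + ‖u‖⁻¹ • vecMulVec (Q *ᵥ z) (Q *ᵥ z) := by
      unfold Amat
      rw [mul_add, add_mul, mul_smul_comm, smul_mul_assoc, mul_one,
        mul_smul_comm, smul_mul_assoc, hSS, mul_vecMulVec, vecMulVec_mul, hST, hQz]
    rw [hH z, hexp, hsqrt]
    congr 1
    by_cases h0 : (Q *ᵥ z) ⬝ᵥ z = 0
    · rw [if_pos h0]
      have hu0 : ‖u‖ = 0 := by
        have := hdot; rw [h0] at this
        nlinarith [norm_nonneg u, this]
      have huz : (u : Fin d → ℝ) = 0 := by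
        have h := norm_eq_zero.mp hu0
        rw [h]; rfl
      rw [hQz, huz]
      ext i j; simp [vecMulVec_apply]
    · rw [if_neg h0]
  -- norm of S and Q
  have hQS : ‖Q‖ = ‖S‖ * ‖S‖ := by
    have h : Sᴴ * S = Q := by rw [hSH]; exact hSS
    rw [← h]
    exact Matrix.l2_opNorm_conjTranspose_mul_self S
  have hQ32 : ‖Q‖ ^ ((3 : ℝ) / 2) = ‖S‖ ^ (3 : ℕ) := by
    rw [hQS, ← pow_two]
    rw [← Real.rpow_natCast ‖S‖ 2, ← Real.rpow_mul (norm_nonneg _),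
      ← Real.rpow_natCast ‖S‖ 3]
    norm_num
  set u : EuclideanSpace ℝ (Fin d) := (WithLp.equiv 2 _).symm (S *ᵥ x) with hu
  set v : EuclideanSpace ℝ (Fin d) := (WithLp.equiv 2 _).symm (S *ᵥ y) with hv
  have huv : ‖u - v‖ ≤ ‖S‖ * ‖x - y‖ := by
    have h1 : u - v = (WithLp.equiv 2 _).symm (S *ᵥ (x - y)) := by
      rw [hu, hv, mulVec_sub]
      rfl
    calc ‖u - v‖ = ‖(WithLp.equiv 2 (Fin d → ℝ)).symm (S *ᵥ (x - y))‖ := by rw [h1]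
      _ ≤ ‖S‖ * ‖x - y‖ := Matrix.l2_opNorm_mulVec S (x - y)
  have hfactor : H x - H y = S * ((Amat u - Amat v) * S) := by
    rw [hrep x, hrep y, ← hu, ← hv]
    noncomm_ring
  calc ‖H x - H y‖ = ‖S * ((Amat u - Amat v) * S)‖ := by rw [hfactor]
    _ ≤ ‖S‖ * ‖(Amat u - Amat v) * S‖ := Matrix.l2_opNorm_mul _ _
    _ ≤ ‖S‖ * (‖Amat u - Amat v‖ * ‖S‖) := by
        apply mul_le_mul_of_nonneg_left (Matrix.l2_opNorm_mul _ _) (norm_nonneg _)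
    _ ≤ ‖S‖ * ((2 * ‖u - v‖) * ‖S‖) := by
        apply mul_le_mul_of_nonneg_left ?_ (norm_nonneg _)
        apply mul_le_mul_of_nonneg_right (Amat_lip u v) (norm_nonneg _)
    _ ≤ ‖S‖ * ((2 * (‖S‖ * ‖x - y‖)) * ‖S‖) := by
        apply mul_le_mul_of_nonneg_left ?_ (norm_nonneg _)
        apply mul_le_mul_of_nonneg_right ?_ (norm_nonneg _)
        linarith [huv]
    _ = 2 * ‖S‖ ^ (3 : ℕ) * ‖x - y‖ := by ring
    _ = 2 * ‖Q‖ ^ ((3 : ℝ) / 2) * ‖x - y‖ := by rw [hQ32]
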